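/- Let T be the VRS technology generated by n observed points and suppose (x₀,y₀) is one of the observations. If (x₀,y₀) is dominated in the Pareto sense by some point of T other than itself (i.e., ∃(x,y) ∈ T, (x,y) ≠ (x₀,y₀), x ≤ x₀, y ≥ y₀), then it is dominated by a point of the form (x₀ - s⁻, y₀ + s⁺) ∈ Ω₀ with (s⁻, s⁺) ≩ 0, where Ω₀ is built from the leave-one-out technology; i.e., the dominating activity can be taken to be a convex combination of the other n-1 observations. -/

import Mathlib

/-- If observation `o` is Pareto dominated by some other point of the full
VRS technology `T`, then it is dominated by a point of `Ω₀`, i.e. by a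
convex combination of the other observations (a weight vector vanishing at
`o`) with nonzero slack vector. -/
theorem stmt_12 {m s n : ℕ} (X : Matrix (Fin m) (Fin n) ℝ) (Y : Matrix (Fin s) (Fin n) ℝ)
    (hX : ∀ i j, 0 ≤ X i j) (hY : ∀ i j, 0 ≤ Y i j)
    (o : Fin n) (x₀ : Fin m → ℝ) (y₀ : Fin s → ℝ)
    (hx₀ : x₀ = fun i => X i o) (hy₀ : y₀ = fun r => Y r o)
    (hdom : ∃ x y, (0 ≤ x ∧ 0 ≤ y ∧ ∃ lam : Fin n → ℝ, 0 ≤ lam ∧ ∑ j, lam j = 1 ∧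
        X.mulVec lam ≤ x ∧ y ≤ Y.mulVec lam) ∧
      (x, y) ≠ (x₀, y₀) ∧ x ≤ x₀ ∧ y₀ ≤ y) :
    ∃ (μ : Fin n → ℝ) (sm : Fin m → ℝ) (sp : Fin s → ℝ),
      0 ≤ μ ∧ μ o = 0 ∧ ∑ j, μ j = 1 ∧ 0 ≤ sm ∧ 0 ≤ sp ∧ ¬(sm = 0 ∧ sp = 0) ∧
      X.mulVec μ + sm ≤ x₀ ∧ y₀ ≤ Y.mulVec μ - sp := by
  obtain ⟨x, y, ⟨hx0, hy0, lam, hlam, hsum, hXl, hYl⟩, hne, hxx, hyy⟩ := hdom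
  by_cases ho : lam o = 1
  · exfalso
    have hz : ∀ j, j ≠ o → lam j = 0 := by
      intro j hj
      by_contra h
      have hpos : 0 < lam j := lt_of_le_of_ne (hlam j) (Ne.symm h)
      have hsub : ({o, j} : Finset (Fin n)) ⊆ Finset.univ := Finset.subset_univ _
      have hpair : ∑ k ∈ ({o, j} : Finset (Fin n)), lam k = lam o + lam j :=
        Finset.sum_pair (Ne.symm hj)
      have hle : ∑ k ∈ ({o, j} : Finset (Fin n)), lam k ≤ ∑ k, lam k :=
        Finset.sum_le_sum_of_subset_of_nonneg hsub (fun k _ _ => hlam k)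
      rw [hpair, hsum, ho] at hle
      linarith
    have hXlo : ∀ i, X.mulVec lam i = x₀ i := by
      intro i
      rw [hx₀]
      simp only [Matrix.mulVec, dotProduct]
      rw [Finset.sum_eq_single o]
      · rw [ho]; ring
      · intro j _ hj; rw [hz j hj]; ring
      · intro h; exact absurd (Finset.mem_univ o) h
    have hYlo : ∀ r, Y.mulVec lam r = y₀ r := by
      intro r
      rw [hy₀]
      simp only [Matrix.mulVec, dotProduct]
      rw [Finset.sum_eq_single o]
      · rw [ho]; ring
      · intro j _ hj; rw [hz j hj]; ring
      · intro h; exact absurd (Finset.mem_univ o) h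
    apply hne
    have hx' : x = x₀ := by
      funext i
      have h1 := hXl i
      have h2 := hxx i
      rw [hXlo i] at h1
      exact le_antisymm h2 h1
    have hy' : y = y₀ := by
      funext r
      have h1 := hYl r
      have h2 := hyy r
      rw [hYlo r] at h1
      exact le_antisymm h1 h2
    rw [hx', hy']
  · have hlo1 : lam o ≤ 1 := by
      rw [← hsum]
      exact Finset.single_le_sum (fun j _ => hlam j) (Finset.mem_univ o)
    have hc : 0 < 1 - lam o := by
      rcases lt_of_le_of_ne hlo1 ho with h
      linarith
    set c := 1 - lam o with hcdef
    set μ : Fin n → ℝ := fun j => if j = o then 0 else lam j / c with hμ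
    have key : ∀ (v : Fin n → ℝ), ∑ j, v j * μ j = (∑ j, v j * lam j - v o * lam o) / c := by
      intro v
      have h1 : ∀ j, v j * μ j = (v j * lam j - (if j = o then v o * lam o else 0)) / c := by
        intro j
        by_cases h : j = o
        · simp [hμ, h]
        · simp [hμ, h]
          ring
      rw [Finset.sum_congr rfl (fun j _ => h1 j)]
      rw [← Finset.sum_div]
      congr 1
      rw [Finset.sum_sub_distrib]
      congr 1
      simp
    have hμnn : 0 ≤ μ := by
      intro j
      by_cases h : j = o
      · simp [hμ, h]
      · simp [hμ, h]
        exact div_nonneg (hlam j) hc.le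
    have hμo : μ o = 0 := by simp [hμ]
    have hμsum : ∑ j, μ j = 1 := by
      have := key (fun _ => 1)
      simp only [one_mul] at this
      rw [this, hsum]
      field_simp
      exact hcdef.symm
    have hXμ : ∀ i, X.mulVec μ i = (X.mulVec lam i - x₀ i * lam o) / c := by
      intro i
      simp only [Matrix.mulVec, dotProduct, hx₀]
      exact key (fun j => X i j)
    have hYμ : ∀ r, Y.mulVec μ r = (Y.mulVec lam r - y₀ r * lam o) / c := by
      intro r
      simp only [Matrix.mulVec, dotProduct, hy₀]
      exact key (fun j => Y r j)
    have hXle : ∀ i, X.mulVec μ i ≤ x₀ i := by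
      intro i
      rw [hXμ i, div_le_iff₀ hc, hcdef]
      have h1 : X.mulVec lam i ≤ x i := hXl i
      have h2 : x i ≤ x₀ i := hxx i
      nlinarith
    have hYge : ∀ r, y₀ r ≤ Y.mulVec μ r := by
      intro r
      rw [hYμ r, le_div_iff₀ hc, hcdef]
      have h1 : y r ≤ Y.mulVec lam r := hYl r
      have h2 : y₀ r ≤ y r := hyy r
      nlinarith
    refine ⟨μ, fun i => x₀ i - X.mulVec μ i, fun r => Y.mulVec μ r - y₀ r,
      hμnn, hμo, hμsum, ?_, ?_, ?_, ?_, ?_⟩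
    · intro i; simp [sub_nonneg]; exact hXle i
    · intro r; simp [sub_nonneg]; exact hYge r
    · rintro ⟨h1, h2⟩
      apply hne
      have hxeq : x = x₀ := by
        funext i
        have hsm0 : x₀ i - X.mulVec μ i = 0 := congrFun h1 i
        have hXμi : X.mulVec μ i = x₀ i := by linarith
        rw [hXμ i, div_eq_iff hc.ne', hcdef] at hXμi
        have h1' : X.mulVec lam i ≤ x i := hXl i
        have h2' : x i ≤ x₀ i := hxx i
        nlinarith
      have hyeq : y = y₀ := by
        funext r
        have hsp0 : Y.mulVec μ r - y₀ r = 0 := congrFun h2 r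
        have hYμr : Y.mulVec μ r = y₀ r := by linarith
        rw [hYμ r, div_eq_iff hc.ne', hcdef] at hYμr
        have h1' : y r ≤ Y.mulVec lam r := hYl r
        have h2' : y₀ r ≤ y r := hyy r
        nlinarith
      rw [hxeq, hyeq]
    · intro i; simp
    · intro r; simp [sub_sub_cancel]
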